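/- (Fejér–Riesz) If p is a nonnegative trigonometric polynomial of one variable with frequencies contained in {−n, ..., n}, then there exists a trigonometric polynomial q with frequencies contained in {0, ..., n} such that p = |q|². -/

import Mathlib

open Complex Filter Polynomial


lemma multiset_split {α : Type*} [DecidableEq α] (σ : α → α) (hσ : ∀ x, σ (σ x) = x)
    (M : Multiset α) (hinv : ∀ x, M.count (σ x) = M.count x)
    (heven : ∀ x, σ x = x → Even (M.count x)) :
    ∃ S : Multiset α, M = S + S.map σ := by
  induction M using Multiset.strongInductionOn with
  | ih M IH =>
  rcases M.empty_or_exists_mem with h | ⟨w, hw⟩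
  · exact ⟨0, by simp [h]⟩
  have hσw : σ w ∈ M.erase w := by
    by_cases hfix : σ w = w
    · have h2 : 2 ≤ M.count w := by
        rcases heven w hfix with ⟨k, hk⟩
        have h1 : 1 ≤ M.count w := (Multiset.one_le_count_iff_mem).2 hw
        omega
      rw [hfix, ← Multiset.count_pos, Multiset.count_erase_self]
      omega
    · rw [Multiset.mem_erase_of_ne hfix]
      rw [← Multiset.count_pos, hinv]
      exact Multiset.count_pos.2 hw
  set M' := (M.erase w).erase (σ w) with hM'
  have hMeq : M = w ::ₘ σ w ::ₘ M' := by
    rw [hM', Multiset.cons_erase hσw, Multiset.cons_erase hw]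
  have hcount : ∀ x, M.count x = M'.count x + (if x = w then 1 else 0) + (if x = σ w then 1 else 0) := by
    intro x
    rw [hMeq]
    simp [Multiset.count_cons]
    omega
  have hσinj : Function.Injective σ := Function.LeftInverse.injective hσ
  have hinv' : ∀ x, M'.count (σ x) = M'.count x := by
    intro x
    have h1 := hcount (σ x)
    have h2 := hcount x
    have e1 : (σ x = w) ↔ (x = σ w) := by
      constructor
      · intro h; rw [← h, hσ]
      · intro h; rw [h, hσ]
    have e2 : (σ x = σ w) ↔ (x = w) := ⟨fun h => hσinj h, fun h => by rw [h]⟩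
    rw [hinv x] at h1
    simp only [e1, e2] at h1
    omega
  have heven' : ∀ x, σ x = x → Even (M'.count x) := by
    intro x hx
    have h2 := hcount x
    have he := heven x hx
    by_cases hxw : x = w
    · have hfix : σ w = w := by rw [← hxw, hx]
      have hxsw : x = σ w := by rw [hfix, hxw]
      simp [hxw, hxsw, hfix] at h2 he ⊢
      rcases he with ⟨k, hk⟩
      refine ⟨k - 1, ?_⟩
      omega
    · have hxsw : x ≠ σ w := by
        intro h; apply hxw; rw [← hσ w, ← h, hx]
      simp [hxw, hxsw] at h2
      rcases he with ⟨k, hk⟩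
      exact ⟨k, by omega⟩
  have hlt : M' < M := by
    rw [hMeq]
    calc M' < σ w ::ₘ M' := Multiset.lt_cons_self _ _
    _ < w ::ₘ σ w ::ₘ M' := Multiset.lt_cons_self _ _
  obtain ⟨S', hS'⟩ := IH M' hlt hinv' heven'
  refine ⟨w ::ₘ S', ?_⟩
  rw [Multiset.map_cons, hMeq, hS']
  ext x
  simp [Multiset.count_cons]
  omega


open Complex Filter Polynomial

noncomputable def eC (x : ℝ) : ℂ := Complex.exp (2 * (Real.pi : ℂ) * Complex.I * (x : ℂ))

lemma eC_ne_zero (x : ℝ) : eC x ≠ 0 := Complex.exp_ne_zero _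

lemma hasDerivAt_eC (x0 : ℝ) : HasDerivAt (fun t : ℝ => eC (x0 + t))
    (2 * (Real.pi : ℂ) * Complex.I * eC x0) 0 := by
  have h1 : HasDerivAt (fun z : ℂ => Complex.exp (2 * (Real.pi : ℂ) * Complex.I * ((x0:ℂ) + z)))
      (2 * (Real.pi : ℂ) * Complex.I * eC x0) 0 := by
    have h2 : HasDerivAt (fun z : ℂ => 2 * (Real.pi : ℂ) * Complex.I * ((x0:ℂ) + z))
        (2 * (Real.pi : ℂ) * Complex.I) 0 := by
      simpa using ((hasDerivAt_id (0:ℂ)).const_add ((x0:ℂ))).const_mul (2 * (Real.pi : ℂ) * Complex.I)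
    have h3 := (Complex.hasDerivAt_exp (2 * (Real.pi : ℂ) * Complex.I * ((x0:ℂ) + 0))).comp 0 h2
    simpa [eC, mul_comm, Function.comp_def] using h3
  have h4 := h1.comp_ofReal (z := 0)
  have hfun : (fun t : ℝ => eC (x0 + t))
      = fun t : ℝ => Complex.exp (2 * (Real.pi : ℂ) * Complex.I * ((x0:ℂ) + (t:ℂ))) := by
    funext t
    simp only [eC]
    norm_cast
  rw [hfun]
  exact h4

lemma slope_eC (x0 : ℝ) : Tendsto (fun t : ℝ => (eC (x0 + t) - eC x0) / (t:ℂ))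
    (nhdsWithin 0 {(0:ℝ)}ᶜ) (nhds (2 * (Real.pi : ℂ) * Complex.I * eC x0)) := by
  have h := hasDerivAt_iff_tendsto_slope.mp (hasDerivAt_eC x0)
  apply h.congr'
  filter_upwards [self_mem_nhdsWithin] with t ht
  simp only [Set.mem_compl_iff, Set.mem_singleton_iff] at ht
  simp [slope, Complex.real_smul, div_eq_inv_mul]

lemma even_mult (P : Polynomial ℂ) (p : ℝ → ℂ) (N : ℕ)
    (hrel : ∀ x : ℝ, P.eval (eC x) = (eC x) ^ N * p x)
    (hreal : ∀ x : ℝ, (p x).im = 0) (hpos : ∀ x : ℝ, 0 ≤ (p x).re)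
    (w : ℂ) (hw : norm w = 1) : Even (P.rootMultiplicity w) := by
  by_cases hP : P = 0
  · simp [hP, Polynomial.rootMultiplicity_zero]
  by_contra hodd
  rw [Nat.not_even_iff_odd] at hodd
  set m := P.rootMultiplicity w with hm
  set Q := P /ₘ (X - C w) ^ m with hQ
  have hPQ : (X - C w) ^ m * Q = P := P.pow_mul_divByMonic_rootMultiplicity_eq w
  have hQw : Q.eval w ≠ 0 := Polynomial.eval_divByMonic_pow_rootMultiplicity_ne_zero w hP
  have hw0 : w ≠ 0 := by
    intro h; rw [h] at hw; simp at hw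
  obtain ⟨x0, hx0⟩ : ∃ x0 : ℝ, eC x0 = w := by
    refine ⟨w.arg / (2 * Real.pi), ?_⟩
    have hpiC : (Real.pi : ℂ) ≠ 0 := by exact_mod_cast Real.pi_ne_zero
    have harg : (2 * (Real.pi : ℂ) * Complex.I * ((w.arg / (2 * Real.pi) : ℝ) : ℂ))
        = w.arg * Complex.I := by
      push_cast
      field_simp
    have h5 := Complex.norm_mul_exp_arg_mul_I w
    rw [hw] at h5
    simp only [Complex.ofReal_one, one_mul] at h5
    rw [eC, harg, h5]
  set c : ℂ := (2 * (Real.pi : ℂ) * Complex.I * w) ^ m * Q.eval w / w ^ N with hc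
  have hcne : c ≠ 0 := by
    apply div_ne_zero
    · refine mul_ne_zero (pow_ne_zero _ ?_) hQw
      refine mul_ne_zero (mul_ne_zero (mul_ne_zero two_ne_zero ?_) Complex.I_ne_zero) hw0
      exact_mod_cast Real.pi_ne_zero
    · exact pow_ne_zero _ hw0
  set F : ℝ → ℂ := fun t => ((eC (x0 + t) - w) / (t:ℂ)) ^ m * Q.eval (eC (x0 + t)) / (eC (x0 + t)) ^ N with hF
  have hcont : Continuous (fun t : ℝ => eC (x0 + t)) := by
    unfold eC
    continuity
  have hFlim : Tendsto F (nhdsWithin 0 {(0:ℝ)}ᶜ) (nhds c) := by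
    have h1 : Tendsto (fun t : ℝ => ((eC (x0 + t) - w) / (t:ℂ)) ^ m)
        (nhdsWithin 0 {(0:ℝ)}ᶜ) (nhds ((2 * (Real.pi : ℂ) * Complex.I * w) ^ m)) := by
      have := slope_eC x0
      rw [hx0] at this
      exact this.pow m
    have h2 : Tendsto (fun t : ℝ => Q.eval (eC (x0 + t)))
        (nhdsWithin 0 {(0:ℝ)}ᶜ) (nhds (Q.eval w)) := by
      have hc2 : Continuous fun t : ℝ => Q.eval (eC (x0 + t)) := (Q.continuous).comp hcont
      have ht := hc2.tendsto 0
      simp only [add_zero, hx0] at ht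
      exact ht.mono_left nhdsWithin_le_nhds
    have h3 : Tendsto (fun t : ℝ => (eC (x0 + t)) ^ N)
        (nhdsWithin 0 {(0:ℝ)}ᶜ) (nhds (w ^ N)) := by
      have ht := (hcont.pow N).tendsto 0
      simp only [Pi.pow_apply, add_zero, hx0] at ht
      exact ht.mono_left nhdsWithin_le_nhds
    exact (h1.mul h2).div h3 (pow_ne_zero _ hw0)
  set g : ℝ → ℝ := fun t => (p (x0 + t)).re / t ^ m with hg
  have hFg : ∀ t : ℝ, t ≠ 0 → F t = ((g t : ℝ) : ℂ) := by
    intro t ht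
    have hpt : p (x0 + t) = (((p (x0 + t)).re : ℝ) : ℂ) := by
      apply Complex.ext
      · simp
      · simp [hreal]
    have hPe := hrel (x0 + t)
    rw [← hPQ] at hPe
    simp only [Polynomial.eval_mul, Polynomial.eval_pow, Polynomial.eval_sub,
      Polynomial.eval_X, Polynomial.eval_C] at hPe
    rw [hpt] at hPe
    have htC : (t : ℂ) ≠ 0 := by exact_mod_cast ht
    have heN : (eC (x0 + t)) ^ N ≠ 0 := pow_ne_zero _ (eC_ne_zero _)
    rw [hF, hg]
    simp only []
    push_cast
    rw [div_pow]
    field_simp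
    linear_combination hPe
  -- now the contradiction
  have hgF : Tendsto (fun t : ℝ => ((g t : ℝ) : ℂ)) (nhdsWithin 0 {(0:ℝ)}ᶜ) (nhds c) := by
    apply hFlim.congr'
    filter_upwards [self_mem_nhdsWithin] with t ht
    simp only [Set.mem_compl_iff, Set.mem_singleton_iff] at ht
    exact hFg t ht
  have hglim : Tendsto g (nhdsWithin 0 {(0:ℝ)}ᶜ) (nhds c.re) :=
    (Complex.continuous_re.tendsto c).comp hgF
  have him : c.im = 0 := by
    have h1 : Tendsto (fun t : ℝ => (((g t : ℝ) : ℂ)).im) (nhdsWithin 0 {(0:ℝ)}ᶜ) (nhds c.im) :=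
      (Complex.continuous_im.tendsto c).comp hgF
    have h2 : Tendsto (fun _ : ℝ => (0:ℝ)) (nhdsWithin 0 {(0:ℝ)}ᶜ) (nhds 0) := tendsto_const_nhds
    have : (fun t : ℝ => (((g t : ℝ) : ℂ)).im) = fun _ : ℝ => (0:ℝ) := by
      funext t; simp
    rw [this] at h1
    exact tendsto_nhds_unique h1 h2
  have hpos' : c.re ≥ 0 := by
    have hsub : Tendsto g (nhdsWithin 0 (Set.Ioi 0)) (nhds c.re) := by
      apply hglim.mono_left
      apply nhdsWithin_mono
      intro x hx
      simp only [Set.mem_Ioi] at hx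
      simp [ne_of_gt hx]
    refine ge_of_tendsto hsub ?_
    filter_upwards [self_mem_nhdsWithin] with t ht
    simp only [Set.mem_Ioi] at ht
    exact div_nonneg (hpos _) (pow_nonneg (le_of_lt ht) m)
  have hneg : c.re ≤ 0 := by
    have hsub : Tendsto g (nhdsWithin 0 (Set.Iio 0)) (nhds c.re) := by
      apply hglim.mono_left
      apply nhdsWithin_mono
      intro x hx
      simp only [Set.mem_Iio] at hx
      simp [ne_of_lt hx]
    refine le_of_tendsto hsub ?_
    filter_upwards [self_mem_nhdsWithin] with t ht
    simp only [Set.mem_Iio] at ht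
    have htm : t ^ m < 0 := hodd.pow_neg ht
    exact div_nonpos_of_nonneg_of_nonpos (hpos _) (le_of_lt htm)
  apply hcne
  apply Complex.ext
  · simp only [Complex.zero_re]
    linarith
  · simp [him]


open Complex Filter Polynomial



lemma eC_abs (x : ℝ) : norm (eC x) = 1 := by
  rw [eC, Complex.norm_exp]
  have h : (2 * (Real.pi:ℂ) * Complex.I * (x:ℂ)).re = 0 := by
    simp
  rw [h, Real.exp_zero]

lemma eC_conj (x : ℝ) : (starRingEnd ℂ) (eC x) = (eC x)⁻¹ := by
  rw [eC, ← Complex.exp_conj, ← Complex.exp_neg]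
  congr 1
  apply Complex.ext <;> simp

lemma key_reindex (N : ℕ) (g : ℤ → ℂ) :
    ∑ j ∈ Finset.Icc (-(N:ℤ)) N, g j = ∑ k ∈ Finset.range (2*N+1), g ((k:ℤ) - N) := by
  refine Finset.sum_nbij' (fun j => (j + N).toNat) (fun k => (k:ℤ) - N) ?_ ?_ ?_ ?_ ?_
  · intro j hj
    simp only [Finset.mem_Icc] at hj
    simp only [Finset.mem_range]
    omega
  · intro k hk
    simp only [Finset.mem_range] at hk
    simp only [Finset.mem_Icc]
    omega
  · intro j hj
    simp only [Finset.mem_Icc] at hj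
    omega
  · intro k hk
    simp only [Finset.mem_range] at hk
    omega
  · intro j hj
    simp only [Finset.mem_Icc] at hj
    congr 1
    omega

lemma neg_reindex (N : ℕ) (g : ℤ → ℂ) :
    ∑ j ∈ Finset.Icc (-(N:ℤ)) N, g j = ∑ j ∈ Finset.Icc (-(N:ℤ)) N, g (-j) := by
  refine Finset.sum_nbij' (fun j => -j) (fun j => -j) ?_ ?_ ?_ ?_ ?_
  · intro j hj; simp only [Finset.mem_Icc] at *; omega
  · intro j hj; simp only [Finset.mem_Icc] at *; omega
  · intro j _; omega
  · intro j _; omega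
  · intro j hj; simp

lemma range_reindex (N : ℕ) (g : ℤ → ℂ) :
    ∑ j ∈ Finset.Icc (0:ℤ) N, g j = ∑ k ∈ Finset.range (N+1), g (k:ℤ) := by
  refine Finset.sum_nbij' (fun j => j.toNat) (fun k => (k:ℤ)) ?_ ?_ ?_ ?_ ?_
  · intro j hj; simp only [Finset.mem_Icc] at hj; simp only [Finset.mem_range]; omega
  · intro k hk; simp only [Finset.mem_range] at hk; simp only [Finset.mem_Icc]; omega
  · intro j hj; simp only [Finset.mem_Icc] at hj; omega
  · intro k _; omega
  · intro j hj; simp only [Finset.mem_Icc] at hj; congr 1; omega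

lemma coeff_sum_range (f : ℕ → ℂ) (M k : ℕ) :
    (∑ j ∈ Finset.range M, C (f j) * X ^ j).coeff k = if k < M then f k else 0 := by
  rw [Polynomial.finset_sum_coeff]
  simp only [Polynomial.coeff_C_mul, Polynomial.coeff_X_pow]
  rw [Finset.sum_congr rfl (fun j _ => by rw [mul_ite, mul_one, mul_zero])]
  rw [Finset.sum_ite_eq (Finset.range M) k f]
  simp [Finset.mem_range]

lemma natDegree_sum_range (f : ℕ → ℂ) (M : ℕ) :
    (∑ j ∈ Finset.range (M+1), C (f j) * X ^ j).natDegree ≤ M := by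
  rw [Polynomial.natDegree_le_iff_coeff_eq_zero]
  intro k hk
  rw [coeff_sum_range]
  simp only [ite_eq_right_iff]
  omega

lemma eval_sum_range (f : ℕ → ℂ) (M : ℕ) (z : ℂ) :
    (∑ j ∈ Finset.range M, C (f j) * X ^ j).eval z = ∑ j ∈ Finset.range M, f j * z ^ j := by
  simp [Polynomial.eval_finset_sum]

lemma eC_inj_aux : Function.Injective (fun k : ℕ => eC (1/(k+2))) := by
  intro m k h
  simp only [eC] at h
  rw [Complex.exp_eq_exp_iff_exists_int] at h
  obtain ⟨j, hj⟩ := h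
  have hne : 2 * (Real.pi:ℂ) * Complex.I ≠ 0 := by
    refine mul_ne_zero (mul_ne_zero two_ne_zero ?_) Complex.I_ne_zero
    exact_mod_cast Real.pi_ne_zero
  have h2 : ((1/(m+2) : ℝ) : ℂ) = ((1/(k+2) : ℝ) : ℂ) + (j : ℂ) := by
    have : 2 * (Real.pi:ℂ) * Complex.I * ((1/(m+2):ℝ):ℂ)
        = 2 * (Real.pi:ℂ) * Complex.I * (((1/(k+2):ℝ):ℂ) + (j:ℂ)) := by
      rw [hj]; ring
    exact mul_left_cancel₀ hne this
  have h3 : (1/(m+2) : ℝ) = 1/(k+2) + (j:ℝ) := by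
    exact_mod_cast h2
  have hm2 : (0:ℝ) < (m:ℝ) + 2 := by positivity
  have hk2 : (0:ℝ) < (k:ℝ) + 2 := by positivity
  have hb1 : (0:ℝ) < 1/((m:ℝ)+2) := by positivity
  have hb2 : (0:ℝ) < 1/((k:ℝ)+2) := by positivity
  have hb3 : 1/((m:ℝ)+2) ≤ 1/2 := by
    rw [div_le_div_iff₀ hm2 (by norm_num)]; linarith
  have hb4 : 1/((k:ℝ)+2) ≤ 1/2 := by
    rw [div_le_div_iff₀ hk2 (by norm_num)]; linarith
  have hjr : (j:ℝ) = 1/((m:ℝ)+2) - 1/((k:ℝ)+2) := by linarith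
  have habs : |(j:ℝ)| < 1 := by
    rw [abs_lt]
    constructor <;> (rw [hjr]; linarith)
  have hj0 : j = 0 := by
    have h5 : |j| < 1 := by exact_mod_cast (by rwa [← Int.cast_abs] at habs : ((|j|:ℤ):ℝ) < 1)
    exact Int.abs_lt_one_iff.mp h5
  rw [hj0] at h3
  simp only [Int.cast_zero, add_zero, one_div] at h3
  have h4 := inv_injective h3
  have : (m:ℝ) = k := by linarith
  exact_mod_cast this

lemma eC_range_infinite : Set.Infinite (Set.range eC) :=
  Set.infinite_of_injective_forall_mem eC_inj_aux (fun k => ⟨1/(k+2), rfl⟩)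


lemma abs_pair (z w : ℂ) (hz : norm z = 1) (hw : w ≠ 0) :
    norm (z - ((starRingEnd ℂ) w)⁻¹) * norm w = norm (z - w) := by
  have hcw : (starRingEnd ℂ) w ≠ 0 := by
    simpa using hw
  have hz0 : z ≠ 0 := by
    intro h; rw [h] at hz; simp at hz
  have hzz : (starRingEnd ℂ) z * z = 1 := by
    rw [mul_comm, Complex.mul_conj]
    rw [Complex.normSq_eq_norm_sq, hz]
    norm_num
  calc norm (z - ((starRingEnd ℂ) w)⁻¹) * norm w
      = norm (z - ((starRingEnd ℂ) w)⁻¹) * norm ((starRingEnd ℂ) w) := by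
        rw [Complex.norm_conj]
    _ = norm ((z - ((starRingEnd ℂ) w)⁻¹) * (starRingEnd ℂ) w) := by rw [norm_mul]
    _ = norm (z * (starRingEnd ℂ) w - 1) := by
        congr 1
        field_simp
    _ = norm ((starRingEnd ℂ) (z * (starRingEnd ℂ) w - 1)) := by
        rw [Complex.norm_conj]
    _ = norm ((starRingEnd ℂ) z * w - 1) := by
        congr 1
        simp [map_sub, map_mul]
    _ = norm ((starRingEnd ℂ) z * (w - z)) := by
        congr 1
        rw [mul_sub, hzz]
    _ = norm ((starRingEnd ℂ) z) * norm (w - z) := by rw [norm_mul]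
    _ = norm (z - w) := by
        rw [Complex.norm_conj, hz, one_mul, norm_sub_rev]

lemma FRmain (N : ℕ) (a : ℤ → ℂ)
    (hconj : ∀ j ∈ Finset.Icc (-(N:ℤ)) (N:ℤ), a (-j) = (starRingEnd ℂ) (a j))
    (haN : a N ≠ 0)
    (hreal : ∀ x : ℝ, (∑ j ∈ Finset.Icc (-(N:ℤ)) (N:ℤ), a j * eC x ^ j).im = 0)
    (hpos : ∀ x : ℝ, 0 ≤ (∑ j ∈ Finset.Icc (-(N:ℤ)) (N:ℤ), a j * eC x ^ j).re) :
    ∃ b : ℤ → ℂ, (∀ j : ℤ, (j < 0 ∨ (N:ℤ) < j) → b j = 0) ∧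
      ∀ x : ℝ, (∑ j ∈ Finset.Icc (-(N:ℤ)) (N:ℤ), a j * eC x ^ j)
        = ((norm (∑ j ∈ Finset.Icc (0:ℤ) (N:ℤ), b j * eC x ^ j))^2 : ℝ) := by
  set p : ℝ → ℂ := fun x => ∑ j ∈ Finset.Icc (-(N:ℤ)) (N:ℤ), a j * eC x ^ j with hpdef
  set P : Polynomial ℂ := ∑ k ∈ Finset.range (2*N+1), C (a ((k:ℤ) - N)) * X ^ k with hPdef
  have hNIcc : (N:ℤ) ∈ Finset.Icc (-(N:ℤ)) (N:ℤ) := by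
    simp only [Finset.mem_Icc]; omega
  have hPcoeff : ∀ k : ℕ, P.coeff k = if k < 2*N+1 then a ((k:ℤ) - N) else 0 :=
    fun k => coeff_sum_range _ _ k
  have hPlead : P.coeff (2*N) = a N := by
    rw [hPcoeff]
    simp only [if_pos (by omega : 2*N < 2*N+1)]
    congr 1
    push_cast
    ring
  have hPne : P ≠ 0 := by
    intro h
    apply haN
    rw [← hPlead, h, Polynomial.coeff_zero]
  have hdegle : P.natDegree ≤ 2*N := natDegree_sum_range _ _
  have hdeg : P.natDegree = 2*N := le_antisymm hdegle (Polynomial.le_natDegree_of_ne_zero (hPlead ▸ haN))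
  have hlead : P.leadingCoeff = a N := by
    rw [Polynomial.leadingCoeff, hdeg, hPlead]
  have hPeval : ∀ x : ℝ, P.eval (eC x) = eC x ^ N * p x := by
    intro x
    have h1 : ∀ j : ℤ, eC x ^ N * (a j * eC x ^ j) = a j * eC x ^ (j + (N:ℤ)) := by
      intro j
      rw [zpow_add₀ (eC_ne_zero x), ← zpow_natCast (eC x) N]
      ring
    calc P.eval (eC x) = ∑ k ∈ Finset.range (2*N+1), a ((k:ℤ) - N) * eC x ^ k :=
          eval_sum_range _ _ _
      _ = ∑ k ∈ Finset.range (2*N+1), a ((k:ℤ) - N) * eC x ^ (((k:ℤ) - N) + (N:ℤ)) := by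
          apply Finset.sum_congr rfl
          intro k _
          congr 1
          rw [show ((k:ℤ) - N) + (N:ℤ) = (k:ℤ) by ring, zpow_natCast]
      _ = ∑ j ∈ Finset.Icc (-(N:ℤ)) (N:ℤ), a j * eC x ^ (j + (N:ℤ)) :=
          (key_reindex N (fun j => a j * eC x ^ (j + (N:ℤ)))).symm
      _ = eC x ^ N * p x := by
          show _ = eC x ^ N * (∑ j ∈ Finset.Icc (-(N:ℤ)) (N:ℤ), a j * eC x ^ j)
          rw [Finset.mul_sum]
          exact (Finset.sum_congr rfl (fun j _ => (h1 j))).symm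
  have hroots_card : P.roots.card = 2*N := by
    rw [← hdeg]
    exact Polynomial.splits_iff_card_roots.mp (IsAlgClosed.splits P)
  have hfact : C (a N) * (P.roots.map (fun w => X - C w)).prod = P := by
    rw [← hlead]
    exact Polynomial.C_leadingCoeff_mul_prod_multiset_X_sub_C (hroots_card.trans hdeg.symm)
  have h0R : (0:ℂ) ∉ P.roots := by
    intro hmem
    have h2 := Polynomial.isRoot_of_mem_roots hmem
    have h3 : P.coeff 0 = 0 := by rwa [Polynomial.coeff_zero_eq_eval_zero]
    rw [hPcoeff 0] at h3
    rw [if_pos (by omega : 0 < 2*N+1)] at h3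
    rw [show ((0:ℕ):ℤ) - N = -(N:ℤ) by push_cast; ring] at h3
    rw [hconj N hNIcc] at h3
    exact haN (by simpa using congrArg (starRingEnd ℂ) h3)
  have hwR : ∀ w ∈ P.roots, w ≠ 0 := fun w hw h0 => h0R (h0 ▸ hw)
  set σ : ℂ → ℂ := fun w => ((starRingEnd ℂ) w)⁻¹ with hσdef
  have hσσ : ∀ w, σ (σ w) = w := by
    intro w
    simp only [hσdef, map_inv₀, Complex.conj_conj, inv_inv]
  have hσinj : Function.Injective σ := Function.LeftInverse.injective hσσ
  -- functional equation / root invariance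
  have hconj' : ∀ k ∈ Finset.range (2*N+1), (starRingEnd ℂ) (a ((N:ℤ) - k)) = a ((k:ℤ) - N) := by
    intro k hk
    simp only [Finset.mem_range] at hk
    have hmem : (N:ℤ) - k ∈ Finset.Icc (-(N:ℤ)) (N:ℤ) := by
      simp only [Finset.mem_Icc]; omega
    have := hconj _ hmem
    rw [show -((N:ℤ) - k) = (k:ℤ) - N by ring] at this
    exact this.symm
  have hRinv : P.roots.map σ = P.roots := by
    set c2 : ℂ := (starRingEnd ℂ) (a N) * (P.roots.map (fun w => -((starRingEnd ℂ) w))).prod with hc2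
    set P2 : Polynomial ℂ := C c2 * ((P.roots.map σ).map (fun w => X - C w)).prod with hP2
    have hc2ne : c2 ≠ 0 := by
      apply mul_ne_zero
      · simpa using haN
      · apply Multiset.prod_ne_zero
        intro hh
        rw [Multiset.mem_map] at hh
        obtain ⟨w, hw, hw0⟩ := hh
        apply hwR w hw
        have : (starRingEnd ℂ) w = 0 := by
          have := neg_eq_zero.mp hw0
          exact this
        simpa using congrArg (starRingEnd ℂ) this
    have hE1 : ∀ z : ℂ, z ≠ 0 →
        z^(2*N) * (starRingEnd ℂ) (P.eval (((starRingEnd ℂ) z)⁻¹)) = P.eval z := by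
      intro z hz
      have hu : (starRingEnd ℂ) (((starRingEnd ℂ) z)⁻¹) = z⁻¹ := by
        rw [map_inv₀, Complex.conj_conj]
      have hterm : ∀ k : ℕ, k ≤ 2*N → z^(2*N) * (z⁻¹)^k = z^(2*N - k) := by
        intro k hk
        rw [inv_pow]
        rw [show 2*N = (2*N - k) + k by omega, pow_add]
        rw [mul_assoc, mul_inv_cancel₀ (pow_ne_zero _ hz), mul_one]
        congr 1
        omega
      rw [eval_sum_range, eval_sum_range]
      rw [map_sum, Finset.mul_sum]
      have hstep : ∀ k ∈ Finset.range (2*N+1),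
          z^(2*N) * (starRingEnd ℂ) (a ((k:ℤ) - N) * (((starRingEnd ℂ) z)⁻¹)^k)
          = (starRingEnd ℂ) (a ((k:ℤ) - N)) * z^(2*N - k) := by
        intro k hk
        simp only [Finset.mem_range] at hk
        rw [map_mul, map_pow, hu, ← hterm k (by omega)]
        ring
      rw [Finset.sum_congr rfl hstep]
      refine Finset.sum_nbij' (fun k => 2*N - k) (fun k => 2*N - k) ?_ ?_ ?_ ?_ ?_
      · intro k hk
        simp only [Finset.mem_range] at hk ⊢
        omega
      · intro k hk
        simp only [Finset.mem_range] at hk ⊢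
        omega
      · intro k hk
        simp only [Finset.mem_range] at hk
        omega
      · intro k hk
        simp only [Finset.mem_range] at hk
        omega
      · intro k hk
        simp only [Finset.mem_range] at hk
        have h3 := hconj' (2*N - k) (by simp only [Finset.mem_range]; omega)
        rw [show ((N:ℤ) - ((2*N - k : ℕ):ℤ)) = (k:ℤ) - N by omega] at h3
        rw [← h3]
    have hE2 : ∀ z : ℂ, z ≠ 0 →
        z^(2*N) * (starRingEnd ℂ) (P.eval (((starRingEnd ℂ) z)⁻¹)) = P2.eval z := by
      intro z hz
      have hu : (starRingEnd ℂ) (((starRingEnd ℂ) z)⁻¹) = z⁻¹ := by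
        rw [map_inv₀, Complex.conj_conj]
      have heval : ∀ (M : Multiset ℂ) (u : ℂ),
          ((M.map (fun w => X - C w)).prod).eval u = (M.map (fun w => u - w)).prod := by
        intro M u
        rw [Polynomial.eval_multiset_prod, Multiset.map_map]
        congr 1
        apply Multiset.map_congr rfl
        intro w _
        simp
      conv_lhs => rw [← hfact]
      rw [Polynomial.eval_mul, Polynomial.eval_C, heval]
      rw [map_mul, map_multiset_prod, Multiset.map_map]
      have hmapeq : P.roots.map ((starRingEnd ℂ) ∘ fun w => ((starRingEnd ℂ) z)⁻¹ - w)
          = P.roots.map (fun w => z⁻¹ - (starRingEnd ℂ) w) := by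
        apply Multiset.map_congr rfl
        intro w _
        simp only [Function.comp_apply, map_sub, hu]
      rw [hmapeq]
      have hzpow : z^(2*N) = (P.roots.map (fun _ => z)).prod := by
        rw [Multiset.map_const', Multiset.prod_replicate, hroots_card]
      rw [hP2, Polynomial.eval_mul, Polynomial.eval_C, heval]
      rw [hc2]
      calc z^(2*N) * ((starRingEnd ℂ) (a N) * (P.roots.map (fun w => z⁻¹ - (starRingEnd ℂ) w)).prod)
          = (starRingEnd ℂ) (a N) * ((P.roots.map (fun _ => z)).prod
              * (P.roots.map (fun w => z⁻¹ - (starRingEnd ℂ) w)).prod) := by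
            rw [← hzpow]; ring
        _ = (starRingEnd ℂ) (a N) * (P.roots.map (fun w => z * (z⁻¹ - (starRingEnd ℂ) w))).prod := by
            rw [← Multiset.prod_map_mul]
        _ = (starRingEnd ℂ) (a N) * (P.roots.map (fun w => (-((starRingEnd ℂ) w)) * (z - σ w))).prod := by
            congr 1
            apply congrArg Multiset.prod
            apply Multiset.map_congr rfl
            intro w hw
            have hcw : (starRingEnd ℂ) w ≠ 0 := by
              intro hh
              exact hwR w hw (by simpa using congrArg (starRingEnd ℂ) hh)
            simp only [hσdef]
            field_simp
            ring
        _ = (starRingEnd ℂ) (a N) * ((P.roots.map (fun w => -((starRingEnd ℂ) w))).prod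
              * (P.roots.map (fun w => z - σ w)).prod) := by
            rw [← Multiset.prod_map_mul]
        _ = (starRingEnd ℂ) (a N) * (P.roots.map (fun w => -((starRingEnd ℂ) w))).prod
              * ((P.roots.map σ).map (fun w => z - w)).prod := by
            simp only [Multiset.map_map, Function.comp_def]
            ring
    have hPP2 : P = P2 := by
      have hsub : P - P2 = 0 := by
        apply Polynomial.eq_zero_of_infinite_isRoot
        apply Set.Infinite.mono ?_ ((Set.finite_singleton (0:ℂ)).infinite_compl)
        intro z hz
        simp only [Set.mem_compl_iff, Set.mem_singleton_iff] at hz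
        show Polynomial.IsRoot _ z
        rw [Polynomial.IsRoot, Polynomial.eval_sub, (hE1 z hz).symm.trans (hE2 z hz), sub_self]
      have := sub_eq_zero.mp hsub
      exact this
    have hP2roots : P2.roots = P.roots.map σ := by
      rw [hP2, Polynomial.roots_C_mul _ hc2ne, Polynomial.roots_multiset_prod_X_sub_C]
    conv_rhs => rw [hPP2]
    exact hP2roots.symm
  have hinv : ∀ x, P.roots.count (σ x) = P.roots.count x := by
    intro x
    conv_lhs => rw [← hRinv]
    exact Multiset.count_map_eq_count' σ P.roots hσinj x
  have heven : ∀ x, σ x = x → Even (P.roots.count x) := by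
    intro x hx
    by_cases hx0 : x = 0
    · rw [Multiset.count_eq_zero_of_notMem (hx0 ▸ h0R)]
      exact Even.zero
    · have habs : norm x = 1 := by
        have hcx : (starRingEnd ℂ) x = x⁻¹ := by
          rw [← inv_inv ((starRingEnd ℂ) x)]
          rw [show ((starRingEnd ℂ) x)⁻¹ = x from hx]
        have h1 : x * (starRingEnd ℂ) x = 1 := by
          rw [hcx, mul_inv_cancel₀ hx0]
        have h2 : Complex.normSq x = 1 := by
          have := Complex.mul_conj x
          rw [h1] at this
          exact_mod_cast this.symm
        have h3 : (norm x)^2 = 1 := by rw [Complex.sq_norm, h2]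
        nlinarith [norm_nonneg x]
      rw [Polynomial.count_roots]
      exact even_mult P p N hPeval hreal hpos x habs
  obtain ⟨S, hS⟩ := multiset_split σ hσσ P.roots hinv heven
  have hcardS : Multiset.card S = N := by
    have := hroots_card
    rw [hS, Multiset.card_add, Multiset.card_map] at this
    omega
  have hS0 : ∀ w ∈ S, w ≠ 0 := by
    intro w hw
    exact hwR w (hS ▸ Multiset.mem_add.mpr (Or.inl hw))
  set prodS : ℝ := (S.map (fun w => norm w)).prod with hprodS
  have hprodS_pos : 0 < prodS := by
    apply Multiset.prod_pos
    intro r hr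
    rw [Multiset.mem_map] at hr
    obtain ⟨w, hw, rfl⟩ := hr
    exact norm_pos_iff.mpr (hS0 w hw)
  set d : ℝ := Real.sqrt (norm (a N) / prodS) with hddef
  have hd2 : d^2 = norm (a N) / prodS :=
    Real.sq_sqrt (div_nonneg (norm_nonneg _) hprodS_pos.le)
  have hdpos : 0 < d := Real.sqrt_pos.mpr (div_pos (norm_pos_iff.mpr haN) hprodS_pos)
  set q : Polynomial ℂ := C (d:ℂ) * (S.map (fun w => X - C w)).prod with hqdef
  have hqdeg : q.natDegree = N := by
    rw [hqdef, Polynomial.natDegree_C_mul (by exact_mod_cast hdpos.ne' : (d:ℂ) ≠ 0),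
      Polynomial.natDegree_multiset_prod_X_sub_C_eq_card, hcardS]
  refine ⟨fun j : ℤ => if 0 ≤ j ∧ j ≤ (N:ℤ) then q.coeff j.toNat else 0, ?_, ?_⟩
  · intro j hj
    dsimp only
    rw [if_neg (by omega)]
  intro x
  set z : ℂ := eC x with hzdef
  have hzabs : norm z = 1 := eC_abs x
  have hz0 : z ≠ 0 := eC_ne_zero x
  have hsum_b : ∑ j ∈ Finset.Icc (0:ℤ) (N:ℤ),
      (if 0 ≤ j ∧ j ≤ (N:ℤ) then q.coeff j.toNat else 0) * eC x ^ j = q.eval z := by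
    rw [range_reindex N (fun j => (if 0 ≤ j ∧ j ≤ (N:ℤ) then q.coeff j.toNat else 0) * eC x ^ j)]
    rw [Polynomial.eval_eq_sum_range' (show q.natDegree < N + 1 by omega)]
    apply Finset.sum_congr rfl
    intro k hk
    simp only [Finset.mem_range] at hk
    rw [if_pos (by constructor <;> omega)]
    rw [Int.toNat_natCast, zpow_natCast]
  have hevalS : ∀ (M : Multiset ℂ) (u : ℂ),
      ((M.map (fun w => X - C w)).prod).eval u = (M.map (fun w => u - w)).prod := by
    intro M u
    rw [Polynomial.eval_multiset_prod, Multiset.map_map]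
    congr 1
    apply Multiset.map_congr rfl
    intro w _
    simp
  have habsprod : ∀ (M : Multiset ℂ),
      norm ((M.map (fun w => z - w)).prod) = (M.map (fun w => norm (z - w))).prod := by
    intro M
    have := map_multiset_prod (normHom (α := ℂ)) (M.map (fun w => z - w))
    rw [Multiset.map_map] at this
    exact this
  have hqabs : norm (q.eval z) = d * (S.map (fun w => norm (z - w))).prod := by
    rw [hqdef, Polynomial.eval_mul, Polynomial.eval_C, norm_mul, hevalS, habsprod]
    congr 1
    rw [Complex.norm_real, Real.norm_eq_abs]
    exact _root_.abs_of_nonneg hdpos.le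
  have hPabs : norm (P.eval z) = norm (a N) * (P.roots.map (fun w => norm (z - w))).prod := by
    conv_lhs => rw [← hfact]
    rw [Polynomial.eval_mul, Polynomial.eval_C, norm_mul, hevalS, habsprod]
  have hRS : (P.roots.map (fun w => norm (z - w))).prod * prodS
      = ((S.map (fun w => norm (z - w))).prod)^2 := by
    rw [hS, Multiset.map_add, Multiset.prod_add, Multiset.map_map, hprodS]
    rw [mul_assoc, ← Multiset.prod_map_mul]
    have hcong : S.map (fun w => ((fun w => norm (z - w)) ∘ σ) w * norm w)
        = S.map (fun w => norm (z - w)) := by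
      apply Multiset.map_congr rfl
      intro w hw
      simp only [Function.comp_apply, hσdef]
      exact abs_pair z w hzabs (hS0 w hw)
    rw [hcong]
    ring
  have hpre : p x = ((p x).re : ℂ) := by
    apply Complex.ext
    · simp
    · rw [Complex.ofReal_im]
      exact hreal x
  have hPp : norm (P.eval z) = (p x).re := by
    rw [hPeval x]
    rw [norm_mul, norm_pow]
    rw [show norm (eC x) = 1 from eC_abs x]
    rw [one_pow, one_mul]
    conv_lhs => rw [hpre]
    rw [Complex.norm_real, Real.norm_eq_abs]
    exact _root_.abs_of_nonneg (hpos x)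
  have hkey : (norm (q.eval z))^2 = (p x).re := by
    calc (norm (q.eval z))^2
        = d^2 * ((S.map (fun w => norm (z - w))).prod)^2 := by rw [hqabs]; ring
      _ = d^2 * ((P.roots.map (fun w => norm (z - w))).prod * prodS) := by rw [hRS]
      _ = norm (a N) * (P.roots.map (fun w => norm (z - w))).prod := by
          rw [hd2]
          field_simp
      _ = (p x).re := by rw [← hPabs, hPp]
  rw [hsum_b, hkey, ← hpre]

lemma shift_sum (N : ℕ) (g : ℤ → ℂ) (x : ℝ) :
    ∑ k ∈ Finset.range (2*N+1), g ((k:ℤ) - N) * eC x ^ k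
    = eC x ^ N * ∑ j ∈ Finset.Icc (-(N:ℤ)) (N:ℤ), g j * eC x ^ j := by
  have h1 : ∀ j : ℤ, eC x ^ N * (g j * eC x ^ j) = g j * eC x ^ (j + (N:ℤ)) := by
    intro j
    rw [zpow_add₀ (eC_ne_zero x), ← zpow_natCast (eC x) N]
    ring
  rw [Finset.mul_sum]
  rw [Finset.sum_congr rfl (fun j _ => h1 j)]
  rw [key_reindex N (fun j => g j * eC x ^ (j + (N:ℤ)))]
  apply Finset.sum_congr rfl
  intro k _
  congr 1
  rw [show ((k:ℤ) - N) + (N:ℤ) = (k:ℤ) by ring, zpow_natCast]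

lemma conj_sum (N : ℕ) (a : ℤ → ℂ) (x : ℝ) :
    (starRingEnd ℂ) (∑ j ∈ Finset.Icc (-(N:ℤ)) (N:ℤ), a j * eC x ^ j)
    = ∑ j ∈ Finset.Icc (-(N:ℤ)) (N:ℤ), (starRingEnd ℂ) (a (-j)) * eC x ^ j := by
  rw [map_sum]
  have h1 : ∀ j : ℤ, (starRingEnd ℂ) (a j * eC x ^ j) = (starRingEnd ℂ) (a j) * eC x ^ (-j) := by
    intro j
    rw [map_mul, map_zpow₀, eC_conj, inv_zpow, ← zpow_neg]
  rw [Finset.sum_congr rfl (fun j _ => h1 j)]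
  rw [neg_reindex N (fun j => (starRingEnd ℂ) (a j) * eC x ^ (-j))]
  apply Finset.sum_congr rfl
  intro j _
  rw [neg_neg]

lemma conj_coeff (N : ℕ) (a : ℤ → ℂ)
    (hreal : ∀ x : ℝ, (∑ j ∈ Finset.Icc (-(N:ℤ)) (N:ℤ), a j * eC x ^ j).im = 0) :
    ∀ j ∈ Finset.Icc (-(N:ℤ)) (N:ℤ), a (-j) = (starRingEnd ℂ) (a j) := by
  set D : Polynomial ℂ := ∑ k ∈ Finset.range (2*N+1),
    C (a ((k:ℤ) - N) - (starRingEnd ℂ) (a (-((k:ℤ) - N)))) * X ^ k with hD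
  have hDzero : D = 0 := by
    apply Polynomial.eq_zero_of_infinite_isRoot
    apply Set.Infinite.mono ?_ eC_range_infinite
    rintro - ⟨x, rfl⟩
    show Polynomial.IsRoot _ (eC x)
    rw [Polynomial.IsRoot, hD, eval_sum_range]
    have hsplit : ∀ k ∈ Finset.range (2*N+1),
        (a ((k:ℤ) - N) - (starRingEnd ℂ) (a (-((k:ℤ) - N)))) * eC x ^ k
        = a ((k:ℤ) - N) * eC x ^ k - (starRingEnd ℂ) (a (-((k:ℤ) - N))) * eC x ^ k := by
      intro k _
      ring
    rw [Finset.sum_congr rfl hsplit, Finset.sum_sub_distrib]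
    rw [shift_sum N a x, shift_sum N (fun j => (starRingEnd ℂ) (a (-j))) x]
    rw [← conj_sum N a x]
    rw [Complex.conj_eq_iff_im.mpr (hreal x)]
    ring
  intro j hj
  simp only [Finset.mem_Icc] at hj
  have hk : ((N:ℤ) - j).toNat < 2*N+1 := by omega
  have hco := coeff_sum_range
    (fun k => a ((k:ℤ) - N) - (starRingEnd ℂ) (a (-((k:ℤ) - N)))) (2*N+1) ((N:ℤ) - j).toNat
  rw [← hD, hDzero, Polynomial.coeff_zero, if_pos hk] at hco
  have he1 : ((((N:ℤ) - j).toNat : ℕ) : ℤ) - N = -j := by omega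
  rw [he1] at hco
  have := sub_eq_zero.mp hco.symm
  rw [neg_neg] at this
  exact this

theorem FRaux (n : ℕ) (a : ℤ → ℂ)
    (hreal : ∀ x : ℝ, (∑ j ∈ Finset.Icc (-(n:ℤ)) (n:ℤ), a j * eC x ^ j).im = 0)
    (hpos : ∀ x : ℝ, 0 ≤ (∑ j ∈ Finset.Icc (-(n:ℤ)) (n:ℤ), a j * eC x ^ j).re) :
    ∃ b : ℤ → ℂ, (∀ j : ℤ, (j < 0 ∨ (n:ℤ) < j) → b j = 0) ∧
      ∀ x : ℝ, (∑ j ∈ Finset.Icc (-(n:ℤ)) (n:ℤ), a j * eC x ^ j)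
        = ((norm (∑ j ∈ Finset.Icc (0:ℤ) (n:ℤ), b j * eC x ^ j))^2 : ℝ) := by
  induction n generalizing a with
  | zero =>
    have h0 : ∀ x : ℝ, (∑ j ∈ Finset.Icc (-((0:ℕ):ℤ)) ((0:ℕ):ℤ), a j * eC x ^ j) = a 0 := by
      intro x
      simp only [Nat.cast_zero, neg_zero, Finset.Icc_self, Finset.sum_singleton, zpow_zero,
        mul_one]
    set r : ℝ := (a 0).re with hr
    have hr0 : 0 ≤ r := by
      have := hpos 0
      rwa [h0 0] at this
    have ha0 : a 0 = (r : ℂ) := by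
      apply Complex.ext
      · simp [hr]
      · rw [Complex.ofReal_im]
        have := hreal 0
        rwa [h0 0] at this
    refine ⟨fun j => if j = 0 then ((Real.sqrt r : ℝ) : ℂ) else 0, ?_, ?_⟩
    · intro j hj
      dsimp only
      rw [if_neg (by omega)]
    · intro x
      rw [h0 x]
      simp only [Nat.cast_zero, Finset.Icc_self, Finset.sum_singleton, if_true, zpow_zero,
        mul_one, Complex.norm_real, Real.norm_eq_abs]
      rw [_root_.abs_of_nonneg (Real.sqrt_nonneg r)]
      rw [Real.sq_sqrt hr0]
      exact ha0
  | succ n IH =>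
    have hconj := conj_coeff (n+1) a hreal
    by_cases ha : a ((n+1:ℕ):ℤ) = 0
    · have haneg : a (-((n+1:ℕ):ℤ)) = 0 := by
        rw [hconj ((n+1:ℕ):ℤ) (by simp only [Finset.mem_Icc]; omega), ha, map_zero]
      have hred : ∀ x : ℝ, (∑ j ∈ Finset.Icc (-((n+1:ℕ):ℤ)) ((n+1:ℕ):ℤ), a j * eC x ^ j)
          = ∑ j ∈ Finset.Icc (-(n:ℤ)) (n:ℤ), a j * eC x ^ j := by
        intro x
        symm
        apply Finset.sum_subset
        · apply Finset.Icc_subset_Icc <;> push_cast <;> omega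
        · intro j hj hnj
          simp only [Finset.mem_Icc] at hj hnj
          push_cast at hj hnj ⊢
          have : j = (n:ℤ)+1 ∨ j = -((n:ℤ)+1) := by omega
          rcases this with h | h
          · rw [h, show ((n:ℤ)+1) = ((n+1:ℕ):ℤ) by push_cast; ring, ha, zero_mul]
          · rw [h, show (-((n:ℤ)+1)) = -((n+1:ℕ):ℤ) by push_cast; ring, haneg, zero_mul]
      obtain ⟨b, hb0, hbeq⟩ := IH a
        (fun x => by rw [← hred x]; exact hreal x)
        (fun x => by rw [← hred x]; exact hpos x)
      refine ⟨b, ?_, ?_⟩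
      · intro j hj
        apply hb0
        push_cast at hj
        omega
      · intro x
        have hsums : ∑ j ∈ Finset.Icc (0:ℤ) ((n+1:ℕ):ℤ), b j * eC x ^ j
            = ∑ j ∈ Finset.Icc (0:ℤ) (n:ℤ), b j * eC x ^ j := by
          symm
          apply Finset.sum_subset
          · apply Finset.Icc_subset_Icc <;> push_cast <;> omega
          · intro j hj hnj
            simp only [Finset.mem_Icc] at hj hnj
            rw [hb0 j (by push_cast at hj hnj ⊢; omega), zero_mul]
        rw [hred x, hbeq x, hsums]
    · exact FRmain (n+1) a hconj ha hreal hpos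

lemma exp_eq_zpow (j : ℤ) (x : ℝ) :
    Complex.exp (2 * (Real.pi : ℂ) * Complex.I * (j : ℂ) * (x : ℂ)) = eC x ^ j := by
  rw [eC, ← Complex.exp_int_mul]
  congr 1
  push_cast
  ring

/-- Fejér–Riesz: a nonnegative trigonometric polynomial with frequencies in
`{-n,…,n}` is the squared modulus of a trigonometric polynomial with
frequencies in `{0,…,n}`. -/
theorem fejer_riesz (n : ℕ) (a : ℤ → ℂ) (p : ℝ → ℂ)
    (hp : ∀ x : ℝ, p x = ∑ j ∈ Finset.Icc (-(n:ℤ)) (n:ℤ),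
      a j * Complex.exp (2 * (Real.pi : ℂ) * Complex.I * (j : ℂ) * (x : ℂ)))
    (hreal : ∀ x : ℝ, (p x).im = 0) (hpos : ∀ x : ℝ, 0 ≤ (p x).re) :
    ∃ b : ℤ → ℂ, (∀ j : ℤ, (j < 0 ∨ (n:ℤ) < j) → b j = 0) ∧
      ∀ x : ℝ, p x =
        ((norm (∑ j ∈ Finset.Icc (0:ℤ) (n:ℤ),
          b j * Complex.exp (2 * (Real.pi : ℂ) * Complex.I * (j : ℂ) * (x : ℂ))))^2 : ℝ) := by
  have hsum : ∀ x : ℝ, p x = ∑ j ∈ Finset.Icc (-(n:ℤ)) (n:ℤ), a j * eC x ^ j := by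
    intro x
    rw [hp x]
    apply Finset.sum_congr rfl
    intro j _
    rw [exp_eq_zpow]
  obtain ⟨b, hb0, hbeq⟩ := FRaux n a
    (fun x => by rw [← hsum x]; exact hreal x)
    (fun x => by rw [← hsum x]; exact hpos x)
  refine ⟨b, hb0, ?_⟩
  intro x
  rw [hsum x, hbeq x]
  have : ∑ j ∈ Finset.Icc (0:ℤ) (n:ℤ),
      b j * Complex.exp (2 * (Real.pi : ℂ) * Complex.I * (j : ℂ) * (x : ℂ))
      = ∑ j ∈ Finset.Icc (0:ℤ) (n:ℤ), b j * eC x ^ j := by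
    apply Finset.sum_congr rfl
    intro j _
    rw [exp_eq_zpow]
  rw [this]
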